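/- Let G be a discrete group, σ a rational multiplier on G with σ^r = 1, K a subfield of ℂ containing the r-th roots of unity, and A^σ ∈ M_d(K(G,σ)) acting on l²(G)^d. Let G^σ be the central extension of G by ℤ_r determined by σ and let Ã = Ψ(A^σ) ∈ M_d(K·G^σ) act on l²(G^σ)^d by left multiplication. Then spec(A^σ) ⊆ spec(Ã) and specpoint(A^σ) ⊆ specpoint(Ã); in particular every eigenvalue of A^σ is an eigenvalue of Ã. -/

import Mathlib

set_option maxHeartbeats 1000000


open scoped ComplexConjugate

noncomputable section

/-- `l²(X)`, the Hilbert space of square-summable complex functions on `X`. -/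
abbrev l2 (X : Type*) : Type _ := lp (fun _ : X => ℂ) 2

/-- A (normalized) multiplier on a discrete group `G`: a `U(1)`-valued 2-cocycle. -/
def IsMultiplier {G : Type*} [Group G] (σ : G → G → ℂ) : Prop :=
  (∀ g h, ‖σ g h‖ = 1) ∧
  (∀ a b c, σ b c * σ a (b * c) = σ (a * b) c * σ a b) ∧
  (∀ g, σ 1 g = 1) ∧ (∀ g, σ g 1 = 1)

/-- `A` acts on `l²(G)^d` (realized as `l²(G × Fin d)`) as the matrix over the twisted
group algebra with coefficient matrices `a g` supported in the finite set `T`, i.e.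
`(Af)(x) = ∑_h a(xh⁻¹) σ(xh⁻¹,h) f(h) = ∑_{g∈T} a(g) σ(g,g⁻¹x) f(g⁻¹x)`. -/
def ActsAsTwisted {G : Type*} [Group G] (σ : G → G → ℂ) (d : ℕ) (T : Finset G)
    (a : G → Matrix (Fin d) (Fin d) ℂ)
    (A : l2 (G × Fin d) →L[ℂ] l2 (G × Fin d)) : Prop :=
  (∀ g, g ∉ T → a g = 0) ∧
  ∀ (f : l2 (G × Fin d)) (x : G) (i : Fin d),
    A f (x, i) = ∑ g ∈ T, ∑ j, a g i j * σ g (g⁻¹ * x) * f (g⁻¹ * x, j)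

/-- `lam` is an eigenvalue of the bounded operator `A` on `l²(X)`. -/
def HasL2Eigenvalue {X : Type*} (A : l2 X →L[ℂ] l2 X) (lam : ℂ) : Prop :=
  ∃ f : l2 X, f ≠ 0 ∧ A f = lam • f

/-- The `σ`-multiplier algebraic eigenvalue property: every matrix over the twisted group
algebra `ℚ̄(G,σ)` acting on `l²(G)^d` has only algebraic eigenvalues. -/
def HasMAEP (G : Type*) [Group G] (σ : G → G → ℂ) : Prop :=
  ∀ (d : ℕ) (T : Finset G) (a : G → Matrix (Fin d) (Fin d) ℂ),
    (∀ g i j, IsAlgebraic ℚ (a g i j)) →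
    ∀ A : l2 (G × Fin d) →L[ℂ] l2 (G × Fin d), ActsAsTwisted σ d T a A →
    ∀ lam : ℂ, HasL2Eigenvalue A lam → IsAlgebraic ℚ lam

/-- The (untwisted) algebraic eigenvalue property. -/
def HasAEP (G : Type*) [Group G] : Prop := HasMAEP G fun _ _ => 1

/-- The underlying set of the central extension `G^σ = ℤ_r ×_σ G` of `G` by the `r`-th
roots of unity determined by a rational multiplier `σ` with `σ^r = 1`. -/
def CentExt (G : Type*) (r : ℕ) : Type _ := {z : ℂ // z ^ r = 1} × G

/-- The group structure on `G^σ`: `(z₁,g₁)·(z₂,g₂) = (z₁z₂σ(g₁,g₂), g₁g₂)`. -/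
def centExtGroup {G : Type*} [Group G] (σ : G → G → ℂ) (r : ℕ) (hr : 0 < r)
    (hσ : IsMultiplier σ) (hrat : ∀ g h, σ g h ^ r = 1) : Group (CentExt G r) := by
  obtain ⟨habs, hcoc, h1l, h1r⟩ := hσ
  letI : Mul (CentExt G r) := ⟨fun p q =>
    ⟨⟨p.1.1 * q.1.1 * σ p.2 q.2, by
        rw [mul_pow, mul_pow, p.1.2, q.1.2, hrat, one_mul, one_mul]⟩, p.2 * q.2⟩⟩
  letI : One (CentExt G r) := ⟨⟨⟨1, one_pow r⟩, 1⟩⟩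
  letI : Inv (CentExt G r) := ⟨fun p =>
    ⟨⟨(p.1.1 * σ p.2 p.2⁻¹)⁻¹, by
        rw [inv_pow, mul_pow, p.1.2, hrat, one_mul, inv_one]⟩, p.2⁻¹⟩⟩
  refine Group.ofLeftAxioms ?_ ?_ ?_
  · intro p q t
    refine Prod.ext (Subtype.ext ?_) (mul_assoc _ _ _)
    show p.1.1 * q.1.1 * σ p.2 q.2 * t.1.1 * σ (p.2 * q.2) t.2
        = p.1.1 * (q.1.1 * t.1.1 * σ q.2 t.2) * σ p.2 (q.2 * t.2)
    linear_combination (-(p.1.1 * q.1.1 * t.1.1)) * hcoc p.2 q.2 t.2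
  · intro p
    refine Prod.ext (Subtype.ext ?_) (one_mul _)
    show (1 : ℂ) * p.1.1 * σ 1 p.2 = p.1.1
    rw [h1l, one_mul, mul_one]
  · intro p
    have hz : p.1.1 ≠ 0 := by
      intro h
      have h2 := p.1.2
      rw [h, zero_pow hr.ne'] at h2
      exact zero_ne_one h2
    have hsne : σ p.2 p.2⁻¹ ≠ 0 := by
      intro h
      have h2 := hrat p.2 p.2⁻¹
      rw [h, zero_pow hr.ne'] at h2
      exact zero_ne_one h2
    have hsymm : σ p.2⁻¹ p.2 = σ p.2 p.2⁻¹ := by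
      have h := hcoc p.2 p.2⁻¹ p.2
      rw [inv_mul_cancel, mul_inv_cancel, h1r, h1l, mul_one, one_mul] at h
      exact h
    refine Prod.ext (Subtype.ext ?_) (inv_mul_cancel _)
    show (p.1.1 * σ p.2 p.2⁻¹)⁻¹ * p.1.1 * σ p.2⁻¹ p.2 = 1
    rw [hsymm, mul_assoc, inv_mul_cancel₀ (mul_ne_zero hz hsne)]

namespace SpecIncl

variable {Z X Y : Type*} [Fintype Z] (e : Y ≃ Z × X)

lemma two_toReal : (2 : ENNReal).toReal = 2 := by norm_num

lemma sq_summable (f : l2 X) : Summable fun x : X => ‖(f : X → ℂ) x‖ ^ (2:ℝ) := by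
  have := (memℓp_gen_iff (p := 2) (by rw [two_toReal]; norm_num)).1 (lp.memℓp f)
  rwa [two_toReal] at this

lemma summable_prodsnd {F : X → ℝ} (hF0 : ∀ x, 0 ≤ F x) (hF : Summable F) :
    Summable fun p : Z × X => F p.2 := by
  rw [summable_prod_of_nonneg (fun p => hF0 p.2)]
  exact ⟨fun _ => hF, Summable.of_finite⟩

lemma summable_snd {F : X → ℝ} (hF0 : ∀ x, 0 ≤ F x) (hF : Summable F) :
    Summable fun y : Y => F (e y).2 :=
  (e.summable_iff (f := fun p : Z × X => F p.2)).2 (summable_prodsnd hF0 hF)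

lemma tsum_snd {F : X → ℝ} (hF0 : ∀ x, 0 ≤ F x) (hF : Summable F) :
    ∑' y : Y, F (e y).2 = (Fintype.card Z : ℝ) * ∑' x, F x := by
  rw [e.tsum_eq (fun p : Z × X => F p.2),
    Summable.tsum_prod' (summable_prodsnd hF0 hF) (fun _ => hF), tsum_fintype]
  simp [Finset.sum_const, nsmul_eq_mul]

variable (u : Z → ℂ)

lemma Vptbound (hu : ∀ z, ‖u z‖ ≤ 1) (f : l2 X) (y : Y) :
    ‖u (e y).1 * (f : X → ℂ) (e y).2‖ ^ (2:ℝ) ≤ ‖(f : X → ℂ) (e y).2‖ ^ (2:ℝ) := by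
  rw [norm_mul]
  refine Real.rpow_le_rpow (by positivity) ?_ (by norm_num)
  calc ‖u (e y).1‖ * ‖(f : X → ℂ) (e y).2‖ ≤ 1 * ‖(f : X → ℂ) (e y).2‖ :=
    mul_le_mul_of_nonneg_right (hu _) (norm_nonneg _)
  _ = _ := one_mul _

lemma Vsummable (hu : ∀ z, ‖u z‖ ≤ 1) (f : l2 X) :
    Summable fun y : Y => ‖u (e y).1 * (f : X → ℂ) (e y).2‖ ^ (2:ℝ) :=
  Summable.of_nonneg_of_le (fun y => by positivity) (Vptbound e u hu f)
    (summable_snd e (fun x => by positivity) (sq_summable f))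

lemma memV (hu : ∀ z, ‖u z‖ ≤ 1) (f : l2 X) : Memℓp (fun y : Y => u (e y).1 * (f : X → ℂ) (e y).2) 2 := by
  apply memℓp_gen
  rw [two_toReal]
  exact Vsummable e u hu f

def Vlm (hu : ∀ z, ‖u z‖ ≤ 1) : l2 X →ₗ[ℂ] l2 Y where
  toFun f := ⟨fun y => u (e y).1 * (f : X → ℂ) (e y).2, memV e u hu f⟩
  map_add' f g := by
    apply lp.ext; funext y
    show u (e y).1 * ((f + g) : X → ℂ) (e y).2 = _
    rw [lp.coeFn_add]
    show u (e y).1 * ((f : X → ℂ) (e y).2 + (g : X → ℂ) (e y).2)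
      = u (e y).1 * (f : X → ℂ) (e y).2 + u (e y).1 * (g : X → ℂ) (e y).2
    ring
  map_smul' c f := by
    apply lp.ext; funext y
    show u (e y).1 * ((c • f) : X → ℂ) (e y).2 = _
    rw [lp.coeFn_smul]
    show u (e y).1 * (c * (f : X → ℂ) (e y).2) = c * (u (e y).1 * (f : X → ℂ) (e y).2)
    ring

lemma Vlm_apply (hu : ∀ z, ‖u z‖ ≤ 1) (f : l2 X) (y : Y) :
    (Vlm e u hu f : Y → ℂ) y = u (e y).1 * (f : X → ℂ) (e y).2 := rfl

lemma Vlm_norm (hu : ∀ z, ‖u z‖ ≤ 1) (f : l2 X) :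
    ‖Vlm e u hu f‖ ≤ Real.sqrt (Fintype.card Z) * ‖f‖ := by
  have h2 : (0:ℝ) < (2:ENNReal).toReal := by rw [two_toReal]; norm_num
  rw [← pow_le_pow_iff_left₀ (norm_nonneg _) (by positivity) (two_ne_zero)]
  have hnorm := lp.norm_rpow_eq_tsum h2 (Vlm e u hu f)
  have hf := lp.norm_rpow_eq_tsum h2 f
  rw [two_toReal] at hnorm hf
  have hle : ∑' y : Y, ‖(Vlm e u hu f : Y → ℂ) y‖ ^ (2:ℝ)
      ≤ (Fintype.card Z : ℝ) * ∑' x, ‖(f : X → ℂ) x‖ ^ (2:ℝ) := by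
    rw [← tsum_snd e (fun x => by positivity) (sq_summable f)]
    exact Summable.tsum_le_tsum (fun y => Vptbound e u hu f y) (Vsummable e u hu f)
      (summable_snd e (fun x => by positivity) (sq_summable f))
  calc ‖Vlm e u hu f‖ ^ 2 = ‖Vlm e u hu f‖ ^ (2:ℝ) := by
        rw [show ((2:ℝ)) = ((2:ℕ):ℝ) by norm_num, Real.rpow_natCast]
  _ = ∑' y : Y, ‖(Vlm e u hu f : Y → ℂ) y‖ ^ (2:ℝ) := hnorm
  _ ≤ (Fintype.card Z : ℝ) * ∑' x, ‖(f : X → ℂ) x‖ ^ (2:ℝ) := hle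
  _ = (Fintype.card Z : ℝ) * ‖f‖ ^ (2:ℝ) := by rw [← hf]
  _ = (Real.sqrt (Fintype.card Z) * ‖f‖) ^ 2 := by
        rw [mul_pow, Real.sq_sqrt (by positivity),
          show ((2:ℝ)) = ((2:ℕ):ℝ) by norm_num, Real.rpow_natCast]

def Vclm (hu : ∀ z, ‖u z‖ ≤ 1) : l2 X →L[ℂ] l2 Y :=
  (Vlm e u hu).mkContinuous (Real.sqrt (Fintype.card Z)) (Vlm_norm e u hu)

lemma Vclm_apply (hu : ∀ z, ‖u z‖ ≤ 1) (f : l2 X) (y : Y) :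
    (Vclm e u hu f : Y → ℂ) y = u (e y).1 * (f : X → ℂ) (e y).2 := rfl


section W

variable (v : Z → ℂ)

lemma Wsummable_aux (h : l2 Y) (z : Z) :
    Summable fun x : X => ‖(h : Y → ℂ) (e.symm (z, x))‖ ^ (2:ℝ) := by
  have hinj : Function.Injective fun x : X => e.symm (z, x) :=
    e.symm.injective.comp (fun a b hab => by simpa using congrArg Prod.snd hab)
  exact (sq_summable h).comp_injective hinj

lemma Wmaj_summable (h : l2 Y) :
    Summable fun x : X => ∑ z : Z, ‖(h : Y → ℂ) (e.symm (z, x))‖ ^ (2:ℝ) :=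
  summable_sum fun z _ => Wsummable_aux e h z

lemma Wmaj_tsum (h : l2 Y) :
    ∑' x : X, ∑ z : Z, ‖(h : Y → ℂ) (e.symm (z, x))‖ ^ (2:ℝ)
      = ∑' y : Y, ‖(h : Y → ℂ) y‖ ^ (2:ℝ) := by
  have hsum : Summable fun p : Z × X => ‖(h : Y → ℂ) (e.symm p)‖ ^ (2:ℝ) :=
    (e.symm.summable_iff (f := fun y : Y => ‖(h : Y → ℂ) y‖ ^ (2:ℝ))).2 (sq_summable h)
  rw [Summable.tsum_finsetSum (s := (Finset.univ : Finset Z)) (f := fun z x => ‖(h : Y → ℂ) (e.symm (z, x))‖ ^ (2:ℝ)) (fun z _ => Wsummable_aux e h z)]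
  rw [← e.symm.tsum_eq (fun y : Y => ‖(h : Y → ℂ) y‖ ^ (2:ℝ))]
  rw [Summable.tsum_prod' hsum (fun z => Wsummable_aux e h z)]
  exact (tsum_fintype _).symm

lemma Wptbound [Nonempty Z] (hv : ∀ z, ‖v z‖ ≤ 1) (h : l2 Y) (x : X) :
    ‖(Fintype.card Z : ℂ)⁻¹ * ∑ z : Z, v z * (h : Y → ℂ) (e.symm (z, x))‖ ^ (2:ℝ)
      ≤ ∑ z : Z, ‖(h : Y → ℂ) (e.symm (z, x))‖ ^ (2:ℝ) := by
  simp only [show ((2:ℝ)) = ((2:ℕ):ℝ) from by norm_num, Real.rpow_natCast]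
  set c : ℝ := (Fintype.card Z : ℝ) with hc
  have hc1 : 1 ≤ c := by
    exact Nat.one_le_cast.2 (Fintype.card_pos (α := Z))
  have hc0 : 0 < c := lt_of_lt_of_le one_pos hc1
  set S : ℝ := ∑ z : Z, ‖(h : Y → ℂ) (e.symm (z, x))‖ with hS
  have hS0 : 0 ≤ S := Finset.sum_nonneg fun z _ => norm_nonneg _
  set Q : ℝ := ∑ z : Z, ‖(h : Y → ℂ) (e.symm (z, x))‖ ^ 2 with hQ
  have hQ0 : 0 ≤ Q := Finset.sum_nonneg fun z _ => by positivity
  have h1 : ‖(Fintype.card Z : ℂ)⁻¹ * ∑ z : Z, v z * (h : Y → ℂ) (e.symm (z, x))‖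
      ≤ c⁻¹ * S := by
    rw [norm_mul, norm_inv]
    have : ‖((Fintype.card Z : ℕ) : ℂ)‖ = c := by
      simp [hc]
    rw [this]
    refine mul_le_mul_of_nonneg_left ?_ (by positivity)
    refine (norm_sum_le _ _).trans ?_
    refine Finset.sum_le_sum fun z _ => ?_
    rw [norm_mul]
    calc ‖v z‖ * ‖(h : Y → ℂ) (e.symm (z, x))‖ ≤ 1 * ‖(h : Y → ℂ) (e.symm (z, x))‖ :=
      mul_le_mul_of_nonneg_right (hv z) (norm_nonneg _)
    _ = _ := one_mul _
  have h2 : S ^ 2 ≤ c * Q := by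
    have := sq_sum_le_card_mul_sum_sq (s := (Finset.univ : Finset Z))
      (f := fun z => ‖(h : Y → ℂ) (e.symm (z, x))‖)
    simpa [hS, hQ, hc, Finset.card_univ] using this
  calc ‖(Fintype.card Z : ℂ)⁻¹ * ∑ z : Z, v z * (h : Y → ℂ) (e.symm (z, x))‖ ^ 2
      ≤ (c⁻¹ * S) ^ 2 := by
        exact pow_le_pow_left₀ (norm_nonneg _) h1 2
  _ = c⁻¹ ^ 2 * S ^ 2 := by ring
  _ ≤ c⁻¹ ^ 2 * (c * Q) := by
        exact mul_le_mul_of_nonneg_left h2 (by positivity)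
  _ = c⁻¹ * Q := by
        field_simp
  _ ≤ 1 * Q := by
        exact mul_le_mul_of_nonneg_right (by
          rw [inv_le_one_iff₀]; right; exact hc1) hQ0
  _ = Q := one_mul _

lemma memW [Nonempty Z] (hv : ∀ z, ‖v z‖ ≤ 1) (h : l2 Y) :
    Memℓp (fun x : X => (Fintype.card Z : ℂ)⁻¹ * ∑ z : Z, v z * (h : Y → ℂ) (e.symm (z, x))) 2 := by
  apply memℓp_gen
  rw [two_toReal]
  exact Summable.of_nonneg_of_le (fun x => by positivity) (Wptbound e v hv h)
    (Wmaj_summable e h)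

def Wlm [Nonempty Z] (hv : ∀ z, ‖v z‖ ≤ 1) : l2 Y →ₗ[ℂ] l2 X where
  toFun h := ⟨fun x => (Fintype.card Z : ℂ)⁻¹ * ∑ z : Z, v z * (h : Y → ℂ) (e.symm (z, x)),
    memW e v hv h⟩
  map_add' f g := by
    apply lp.ext; funext x
    show (Fintype.card Z : ℂ)⁻¹ * ∑ z : Z, v z * ((f + g) : Y → ℂ) (e.symm (z, x)) = _
    rw [lp.coeFn_add]
    show (Fintype.card Z : ℂ)⁻¹ * ∑ z : Z, v z *
        ((f : Y → ℂ) (e.symm (z, x)) + (g : Y → ℂ) (e.symm (z, x)))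
      = (Fintype.card Z : ℂ)⁻¹ * ∑ z : Z, v z * (f : Y → ℂ) (e.symm (z, x))
        + (Fintype.card Z : ℂ)⁻¹ * ∑ z : Z, v z * (g : Y → ℂ) (e.symm (z, x))
    simp only [Finset.mul_sum]
    rw [← Finset.sum_add_distrib]
    exact Finset.sum_congr rfl fun z _ => by ring
  map_smul' c f := by
    apply lp.ext; funext x
    show (Fintype.card Z : ℂ)⁻¹ * ∑ z : Z, v z * ((c • f) : Y → ℂ) (e.symm (z, x)) = _
    rw [lp.coeFn_smul]
    show (Fintype.card Z : ℂ)⁻¹ * ∑ z : Z, v z * (c * (f : Y → ℂ) (e.symm (z, x)))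
      = c * ((Fintype.card Z : ℂ)⁻¹ * ∑ z : Z, v z * (f : Y → ℂ) (e.symm (z, x)))
    simp only [Finset.mul_sum]
    exact Finset.sum_congr rfl fun z _ => by ring

lemma Wlm_apply [Nonempty Z] (hv : ∀ z, ‖v z‖ ≤ 1) (h : l2 Y) (x : X) :
    (Wlm e v hv h : X → ℂ) x
      = (Fintype.card Z : ℂ)⁻¹ * ∑ z : Z, v z * (h : Y → ℂ) (e.symm (z, x)) := rfl

lemma Wlm_norm [Nonempty Z] (hv : ∀ z, ‖v z‖ ≤ 1) (h : l2 Y) :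
    ‖Wlm e v hv h‖ ≤ 1 * ‖h‖ := by
  rw [one_mul]
  have h2 : (0:ℝ) < (2:ENNReal).toReal := by rw [two_toReal]; norm_num
  rw [← pow_le_pow_iff_left₀ (norm_nonneg _) (norm_nonneg _) (two_ne_zero)]
  have hnorm := lp.norm_rpow_eq_tsum h2 (Wlm e v hv h)
  have hh := lp.norm_rpow_eq_tsum h2 h
  rw [two_toReal] at hnorm hh
  have hle : ∑' x : X, ‖(Wlm e v hv h : X → ℂ) x‖ ^ (2:ℝ)
      ≤ ∑' y : Y, ‖(h : Y → ℂ) y‖ ^ (2:ℝ) := by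
    rw [← Wmaj_tsum e h]
    refine Summable.tsum_le_tsum (fun x => ?_) ?_ (Wmaj_summable e h)
    · exact Wptbound e v hv h x
    · exact Summable.of_nonneg_of_le (fun x => by positivity) (Wptbound e v hv h)
        (Wmaj_summable e h)
  calc ‖Wlm e v hv h‖ ^ 2 = ‖Wlm e v hv h‖ ^ (2:ℝ) := by
        rw [show ((2:ℝ)) = ((2:ℕ):ℝ) by norm_num, Real.rpow_natCast]
  _ = ∑' x : X, ‖(Wlm e v hv h : X → ℂ) x‖ ^ (2:ℝ) := hnorm
  _ ≤ ∑' y : Y, ‖(h : Y → ℂ) y‖ ^ (2:ℝ) := hle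
  _ = ‖h‖ ^ (2:ℝ) := hh.symm
  _ = ‖h‖ ^ 2 := by rw [show ((2:ℝ)) = ((2:ℕ):ℝ) by norm_num, Real.rpow_natCast]

def Wclm [Nonempty Z] (hv : ∀ z, ‖v z‖ ≤ 1) : l2 Y →L[ℂ] l2 X :=
  (Wlm e v hv).mkContinuous 1 (Wlm_norm e v hv)

lemma Wclm_apply [Nonempty Z] (hv : ∀ z, ‖v z‖ ≤ 1) (h : l2 Y) (x : X) :
    (Wclm e v hv h : X → ℂ) x
      = (Fintype.card Z : ℂ)⁻¹ * ∑ z : Z, v z * (h : Y → ℂ) (e.symm (z, x)) := rfl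

lemma Wclm_comp_Vclm [Nonempty Z] (u : Z → ℂ) (hu : ∀ z, ‖u z‖ ≤ 1)
    (hv : ∀ z, ‖v z‖ ≤ 1) (huv : ∀ z, v z * u z = 1) :
    (Wclm e v hv).comp (Vclm e u hu) = ContinuousLinearMap.id ℂ (l2 X) := by
  refine ContinuousLinearMap.ext fun f => ?_
  apply lp.ext; funext x
  rw [ContinuousLinearMap.comp_apply, Wclm_apply, ContinuousLinearMap.id_apply]
  have : ∀ z : Z, v z * (Vclm e u hu f : Y → ℂ) (e.symm (z, x)) = (f : X → ℂ) x := by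
    intro z
    rw [Vclm_apply, Equiv.apply_symm_apply, ← mul_assoc, huv z, one_mul]
  rw [Finset.sum_congr rfl fun z _ => this z, Finset.sum_const, Finset.card_univ,
    nsmul_eq_mul, ← mul_assoc, inv_mul_cancel₀ (Nat.cast_ne_zero.2 Fintype.card_ne_zero),
    one_mul]

end W

end SpecIncl

open ContinuousLinearMap in
lemma spec_subset_of_intertwine {E F : Type*} [NormedAddCommGroup E] [NormedSpace ℂ E]
    [NormedAddCommGroup F] [NormedSpace ℂ F] [CompleteSpace E] [CompleteSpace F]
    (A : E →L[ℂ] E) (B : F →L[ℂ] F) (V : E →L[ℂ] F) (W : F →L[ℂ] E)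
    (hV : B.comp V = V.comp A) (hW : W.comp B = A.comp W)
    (hWV : W.comp V = ContinuousLinearMap.id ℂ E) :
    spectrum ℂ A ⊆ spectrum ℂ B := by
  intro lam hlam
  rw [spectrum.mem_iff] at hlam ⊢
  intro hB
  apply hlam
  set LA : E →L[ℂ] E := algebraMap ℂ _ lam - A with hLA
  set LB : F →L[ℂ] F := algebraMap ℂ _ lam - B with hLB
  obtain ⟨uB, huB⟩ := hB
  set C : F →L[ℂ] F := ↑uB⁻¹ with hC
  have hBC : LB.comp C = ContinuousLinearMap.id ℂ F := by
    rw [← huB, ← mul_def, uB.mul_inv, one_def]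
  have hCB : C.comp LB = ContinuousLinearMap.id ℂ F := by
    rw [← huB, ← mul_def, uB.inv_mul, one_def]
  have hWx : ∀ x, A (W x) = W (B x) := fun x =>
    (congrFun (congrArg DFunLike.coe hW.symm) x).trans (by simp)
  have hVx : ∀ x, V (A x) = B (V x) := fun x =>
    (congrFun (congrArg DFunLike.coe hV.symm) x).trans (by simp)
  have hLW : LA.comp W = W.comp LB := by
    ext x
    simp [hLA, hLB, Algebra.algebraMap_eq_smul_one, hWx x]
  have hLV : LB.comp V = V.comp LA := by
    ext x
    simp [hLA, hLB, Algebra.algebraMap_eq_smul_one, hVx x]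
  have hLWx : ∀ y, LA (W y) = W (LB y) := fun y => by
    simpa using congrFun (congrArg DFunLike.coe hLW) y
  have hLVx : ∀ x, LB (V x) = V (LA x) := fun x => by
    simpa using congrFun (congrArg DFunLike.coe hLV) x
  have hBCx : ∀ w, LB (C w) = w := fun w => by
    simpa using congrFun (congrArg DFunLike.coe hBC) w
  have hCBx : ∀ w, C (LB w) = w := fun w => by
    simpa using congrFun (congrArg DFunLike.coe hCB) w
  have hWVx : ∀ x, W (V x) = x := fun x => by
    simpa using congrFun (congrArg DFunLike.coe hWV) x
  set D : E →L[ℂ] E := (W.comp C).comp V with hD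
  refine isUnit_iff_exists.2 ⟨D, ?_, ?_⟩
  · refine ContinuousLinearMap.ext fun x => ?_
    show LA (D x) = x
    rw [hD]
    show LA (W (C (V x))) = x
    rw [hLWx, hBCx, hWVx]
  · refine ContinuousLinearMap.ext fun x => ?_
    show D (LA x) = x
    rw [hD]
    show W (C (V (LA x))) = x
    rw [← hLVx, hCBx, hWVx]



lemma rpow_aux {r : ℕ} {a b c : ℂ} (ha : a ^ r = 1) (hb : b ^ r = 1) (hc : c ^ r = 1) :
    (a⁻¹ * b * c) ^ r = 1 := by
  rw [mul_pow, mul_pow, inv_pow, ha, inv_one, hb, hc]; ring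

/-- The canonical lift `G → G^σ`. -/
def iotaCE (G : Type*) (r : ℕ) (g : G) : CentExt G r := ⟨⟨1, one_pow r⟩, g⟩

/-- Building an element of `G^σ` from a root of unity and a group element. -/
def pairCE {G : Type*} {r : ℕ} (z : {z : ℂ // z ^ r = 1}) (g : G) : CentExt G r := ⟨z, g⟩

@[simp] lemma iotaCE_fst (G : Type*) (r : ℕ) (g : G) :
    (iotaCE G r g).1 = ⟨1, one_pow r⟩ := rfl
@[simp] lemma iotaCE_snd (G : Type*) (r : ℕ) (g : G) : (iotaCE G r g).2 = g := rfl
@[simp] lemma pairCE_fst {G : Type*} {r : ℕ} (z : {z : ℂ // z ^ r = 1}) (g : G) :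
    (pairCE z g).1 = z := rfl
@[simp] lemma pairCE_snd {G : Type*} {r : ℕ} (z : {z : ℂ // z ^ r = 1}) (g : G) :
    (pairCE z g).2 = g := rfl

/-- The index equivalence `G^σ × Fin d ≃ ℤ_r × (G × Fin d)`. -/
def ceEquiv (G : Type*) (r d : ℕ) :
    (CentExt G r × Fin d) ≃ ({z : ℂ // z ^ r = 1} × (G × Fin d)) where
  toFun p := (p.1.1, (p.1.2, p.2))
  invFun q := (pairCE q.1 q.2.1, q.2.2)
  left_inv p := rfl
  right_inv q := rfl

@[simp] lemma ceEquiv_apply {G : Type*} {r d : ℕ} (p : CentExt G r × Fin d) :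
    ceEquiv G r d p = (p.1.1, (p.1.2, p.2)) := rfl
@[simp] lemma ceEquiv_symm_apply {G : Type*} {r d : ℕ}
    (q : {z : ℂ // z ^ r = 1} × (G × Fin d)) :
    (ceEquiv G r d).symm q = (pairCE q.1 q.2.1, q.2.2) := rfl

lemma centExt_iota_inv_mul {G : Type*} [Group G] (σ : G → G → ℂ) (r : ℕ) (hr : 0 < r)
    (hσ : IsMultiplier σ) (hrat : ∀ g h, σ g h ^ r = 1) (g : G) (y : CentExt G r) :
    (letI : Group (CentExt G r) := centExtGroup σ r hr hσ hrat
     (iotaCE G r g)⁻¹ * y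
      = pairCE ⟨(σ g g⁻¹)⁻¹ * y.1.1 * σ g⁻¹ y.2,
          rpow_aux (hrat g g⁻¹) y.1.2 (hrat g⁻¹ y.2)⟩ (g⁻¹ * y.2)) := by
  obtain ⟨habs, hcoc, h1l, h1r⟩ := hσ
  refine Prod.ext (Subtype.ext ?_) rfl
  show ((1:ℂ) * σ g g⁻¹)⁻¹ * y.1.1 * σ g⁻¹ y.2 = (σ g g⁻¹)⁻¹ * y.1.1 * σ g⁻¹ y.2
  rw [one_mul]

lemma inv_key {w s t z : ℂ} (hs : s ≠ 0) (hz : z ≠ 0) (hkey : s * t = w) :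
    (w⁻¹ * z * s)⁻¹ = z⁻¹ * t := by
  subst hkey
  by_cases ht : t = 0
  · simp [ht]
  · field_simp

lemma pairCE_congr {G : Type*} {r : ℕ} (z₁ z₂ : {z : ℂ // z ^ r = 1}) (g : G)
    (h : (z₁ : ℂ) = z₂) : pairCE z₁ g = pairCE z₂ g := by
  congr 1
  exact Subtype.ext h

lemma swap_helper {β ι κ : Type*} [Fintype β] [Fintype κ] (s : Finset ι) (c : ℂ) (w : β → ℂ)
    (F : ι → κ → β → ℂ) :
    c * ∑ b : β, w b * ∑ g ∈ s, ∑ j : κ, F g j b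
      = ∑ g ∈ s, ∑ j : κ, c * ∑ b : β, w b * F g j b := by
  simp only [Finset.mul_sum]
  rw [Finset.sum_comm]
  refine Finset.sum_congr rfl fun g _ => ?_
  rw [Finset.sum_comm]


open scoped Classical in
/-- **Spectral inclusion for rational multipliers.** Let `σ` be a rational multiplier
(`σ^r = 1`) on `G` with values in a subfield `K` containing the `r`-th roots of unity,
and let `A^σ ∈ M_d(K(G,σ))` act on `l²(G)^d`. Let `Ã = Ψ(A^σ)` be the associated
untwisted matrix over `K·G^σ`, with coefficients `Ã(z,g) = A(g)` if `z = 1` and `0`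
otherwise, acting on `l²(G^σ)^d`. Then `spec(A^σ) ⊆ spec(Ã)` and every eigenvalue of
`A^σ` is an eigenvalue of `Ã`. -/
theorem rational_multiplier_spectral_inclusion {G : Type*} [Group G]
    (σ : G → G → ℂ) (hσ : IsMultiplier σ) (r : ℕ) (hr : 0 < r)
    (hrat : ∀ g h, σ g h ^ r = 1)
    (K : Subfield ℂ) (hK : ∀ z : ℂ, z ^ r = 1 → z ∈ K)
    (d : ℕ) (T : Finset G) (a : G → Matrix (Fin d) (Fin d) ℂ)
    (haK : ∀ g i j, a g i j ∈ K)
    (A : l2 (G × Fin d) →L[ℂ] l2 (G × Fin d)) (hA : ActsAsTwisted σ d T a A) :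
    letI : Group (CentExt G r) := centExtGroup σ r hr hσ hrat
    ∀ (T' : Finset (CentExt G r))
      (Atil : l2 (CentExt G r × Fin d) →L[ℂ] l2 (CentExt G r × Fin d)),
      ActsAsTwisted (fun _ _ => (1 : ℂ)) d T'
        (fun p => if p.1.1 = 1 then a p.2 else 0) Atil →
      spectrum ℂ A ⊆ spectrum ℂ Atil ∧
      ∀ lam : ℂ, HasL2Eigenvalue A lam → HasL2Eigenvalue Atil lam := by
  classical
  intro T' Atil hAtil
  haveI : DecidableEq (CentExt G r) := Classical.decEq _
  letI instCE : Group (CentExt G r) := centExtGroup σ r hr hσ hrat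
  have habs := hσ.1
  have hcoc := hσ.2.1
  have h1l := hσ.2.2.1
  have hne : ∀ p q : G, σ p q ≠ 0 := by
    intro p q h0
    have h1 := habs p q
    rw [h0] at h1
    simp at h1
  haveI : Fintype {z : ℂ // z ^ r = 1} :=
    Fintype.ofFinset (Polynomial.nthRoots r (1 : ℂ)).toFinset
      (fun z => by rw [Multiset.mem_toFinset, Polynomial.mem_nthRoots hr]; exact Iff.rfl)
  haveI : Nonempty {z : ℂ // z ^ r = 1} := ⟨⟨1, one_pow r⟩⟩
  have hzne : ∀ z : {z : ℂ // z ^ r = 1}, (z : ℂ) ≠ 0 := by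
    intro z h0
    have h2 := z.2
    rw [h0, zero_pow hr.ne'] at h2
    exact zero_ne_one h2
  have hznorm : ∀ z : {z : ℂ // z ^ r = 1}, ‖(z : ℂ)‖ = 1 := fun z =>
    Complex.norm_eq_one_of_pow_eq_one z.2 hr.ne'
  have hu : ∀ z : {z : ℂ // z ^ r = 1}, ‖(z : ℂ)⁻¹‖ ≤ 1 := fun z => by
    rw [norm_inv, hznorm z]; norm_num
  have hv : ∀ z : {z : ℂ // z ^ r = 1}, ‖(z : ℂ)‖ ≤ 1 := fun z => (hznorm z).le
  have huv : ∀ z : {z : ℂ // z ^ r = 1}, (z : ℂ) * (z : ℂ)⁻¹ = 1 := fun z =>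
    mul_inv_cancel₀ (hzne z)
  have hAtil1 := hAtil.1
  have hAtil2 := hAtil.2
  have hA1 := hA.1
  have hA2 := hA.2
  -- rewrite the action of Atil as a sum over T
  have hAtilsum : ∀ (h : l2 (CentExt G r × Fin d)) (y : CentExt G r) (i : Fin d),
      (Atil h : CentExt G r × Fin d → ℂ) (y, i)
        = ∑ g ∈ T, ∑ j, a g i j
            * (h : CentExt G r × Fin d → ℂ) ((iotaCE G r g)⁻¹ * y, j) := by
    intro h y i
    have hstep0 : (Atil h : CentExt G r × Fin d → ℂ) (y, i)
        = ∑ p ∈ T', ∑ j, (if p.1.1 = 1 then a p.2 else 0) i j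
            * (h : CentExt G r × Fin d → ℂ) (p⁻¹ * y, j) := by
      have h0 := hAtil2 h y i
      simp only [mul_one] at h0
      exact h0
    set P : CentExt G r → ℂ := fun p => ∑ j, (if p.1.1 = 1 then a p.2 else 0) i j
        * (h : CentExt G r × Fin d → ℂ) (p⁻¹ * y, j) with hP
    have hstep1 : ∑ p ∈ T', P p = ∑ p ∈ T' ∪ T.image (iotaCE G r), P p :=
      Finset.sum_subset Finset.subset_union_left (fun p _ hp => by
        simp only [hP, hAtil1 p hp, Matrix.zero_apply, zero_mul, Finset.sum_const_zero])
    have hstep2 : ∑ p ∈ T.image (iotaCE G r), P p = ∑ p ∈ T' ∪ T.image (iotaCE G r), P p := by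
      refine Finset.sum_subset Finset.subset_union_right (fun p _ hp => ?_)
      by_cases hc : p.1.1 = 1
      · have hpe : p = iotaCE G r p.2 := Prod.ext (Subtype.ext hc) rfl
        have hpT : p.2 ∉ T := fun hT => hp (by
          rw [hpe]; exact Finset.mem_image_of_mem _ hT)
        simp only [hP, hc, if_true, hA1 p.2 hpT, Matrix.zero_apply, zero_mul,
          Finset.sum_const_zero]
      · simp only [hP, if_neg hc, Matrix.zero_apply, zero_mul, Finset.sum_const_zero]
    have hstep3 : ∑ p ∈ T.image (iotaCE G r), P p
        = ∑ g ∈ T, ∑ j, a g i j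
            * (h : CentExt G r × Fin d → ℂ) ((iotaCE G r g)⁻¹ * y, j) := by
      refine (by convert (Finset.sum_image (f := P) (s := T) (g := iotaCE G r) (fun g₁ _ g₂ _ hgg => congrArg Prod.snd hgg)) : ∑ p ∈ T.image (iotaCE G r), P p = ∑ g ∈ T, P (iotaCE G r g)).trans ?_
      refine Finset.sum_congr rfl fun g _ => ?_
      simp only [hP, iotaCE_fst, iotaCE_snd]
      simp
    rw [hstep0]
    show ∑ p ∈ T', P p = _
    rw [hstep1, ← hstep2, hstep3]
  have hpt : ∀ (g : G) (y : CentExt G r), (iotaCE G r g)⁻¹ * y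
      = pairCE ⟨(σ g g⁻¹)⁻¹ * y.1.1 * σ g⁻¹ y.2,
          rpow_aux (hrat g g⁻¹) y.1.2 (hrat g⁻¹ y.2)⟩ (g⁻¹ * y.2) :=
    fun g y => centExt_iota_inv_mul σ r hr hσ hrat g y
  have hkey : ∀ (g x : G), σ g⁻¹ x * σ g (g⁻¹ * x) = σ g g⁻¹ := by
    intro g x
    have h0 := hcoc g g⁻¹ x
    rw [mul_inv_cancel, h1l, one_mul] at h0
    exact h0
  -- the V intertwining
  have hVA : Atil.comp (SpecIncl.Vclm (ceEquiv G r d) (fun z => (z : ℂ)⁻¹) hu)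
      = (SpecIncl.Vclm (ceEquiv G r d) (fun z => (z : ℂ)⁻¹) hu).comp A := by
    refine ContinuousLinearMap.ext fun f => ?_
    apply lp.ext
    funext yi
    obtain ⟨y, i⟩ := yi
    rw [ContinuousLinearMap.comp_apply, ContinuousLinearMap.comp_apply]
    rw [hAtilsum _ y i]
    simp only [SpecIncl.Vclm_apply, ceEquiv_apply, hpt, pairCE_fst, pairCE_snd]
    rw [hA2 f y.2 i, Finset.mul_sum]
    refine Finset.sum_congr rfl fun g _ => ?_
    rw [Finset.mul_sum]
    refine Finset.sum_congr rfl fun j _ => ?_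
    rw [inv_key (hne g⁻¹ y.2) (hzne y.1) (hkey g y.2)]
    ring
  -- the W intertwining
  have hWA : (SpecIncl.Wclm (ceEquiv G r d) (fun z => (z : ℂ)) hv).comp Atil
      = A.comp (SpecIncl.Wclm (ceEquiv G r d) (fun z => (z : ℂ)) hv) := by
    refine ContinuousLinearMap.ext fun h => ?_
    apply lp.ext
    funext xi
    obtain ⟨x, i⟩ := xi
    have hpt2 : ∀ (g : G) (z : {z : ℂ // z ^ r = 1}),
        (iotaCE G r g)⁻¹ * (pairCE z x)
          = pairCE ⟨(σ g g⁻¹)⁻¹ * (z : ℂ) * σ g⁻¹ x,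
              rpow_aux (hrat g g⁻¹) z.2 (hrat g⁻¹ x)⟩ (g⁻¹ * x) :=
      fun g z => hpt g (pairCE z x)
    rw [ContinuousLinearMap.comp_apply, ContinuousLinearMap.comp_apply,
      SpecIncl.Wclm_apply, hA2 _ x i]
    simp only [ceEquiv_symm_apply, hAtilsum, hpt2, SpecIncl.Wclm_apply]
    have hre : ∀ (g : G) (j : Fin d) (co : ℂ),
        ∑ z : {z : ℂ // z ^ r = 1}, (z : ℂ)
            * (co * (h : CentExt G r × Fin d → ℂ)
              (pairCE ⟨(σ g g⁻¹)⁻¹ * (z : ℂ) * σ g⁻¹ x,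
                rpow_aux (hrat g g⁻¹) z.2 (hrat g⁻¹ x)⟩ (g⁻¹ * x), j))
          = σ g (g⁻¹ * x) * co * ∑ w : {z : ℂ // z ^ r = 1}, (w : ℂ)
              * (h : CentExt G r × Fin d → ℂ) (pairCE w (g⁻¹ * x), j) := by
      intro g j co
      have hcpow : (σ g (g⁻¹ * x)) ^ r = 1 := hrat _ _
      have hcinv : (σ g (g⁻¹ * x))⁻¹ ^ r = 1 := by rw [inv_pow, hcpow, inv_one]
      have hcne : σ g (g⁻¹ * x) ≠ 0 := hne _ _
      rw [Finset.mul_sum]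
      refine (Fintype.sum_equiv
        (⟨fun w => ⟨(w : ℂ) * σ g (g⁻¹ * x), by rw [mul_pow, w.2, hcpow, one_mul]⟩,
          fun w => ⟨(w : ℂ) * (σ g (g⁻¹ * x))⁻¹, by rw [mul_pow, w.2, hcinv, one_mul]⟩,
          fun w => Subtype.ext (by
            show (w : ℂ) * σ g (g⁻¹ * x) * (σ g (g⁻¹ * x))⁻¹ = (w : ℂ)
            rw [mul_assoc, mul_inv_cancel₀ hcne, mul_one]),
          fun w => Subtype.ext (by
            show (w : ℂ) * (σ g (g⁻¹ * x))⁻¹ * σ g (g⁻¹ * x) = (w : ℂ)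
            rw [mul_assoc, inv_mul_cancel₀ hcne, mul_one])⟩ : {z : ℂ // z ^ r = 1} ≃ {z : ℂ // z ^ r = 1})
        _ _ fun w => ?_).symm
      simp only [Equiv.coe_fn_mk]
      have hsne : σ g⁻¹ x ≠ 0 := hne _ _
      have hval : (σ g g⁻¹)⁻¹ * ((w : ℂ) * σ g (g⁻¹ * x)) * σ g⁻¹ x = (w : ℂ) := by
        rw [← hkey g x, mul_inv]
        rw [show (σ g⁻¹ x)⁻¹ * (σ g (g⁻¹ * x))⁻¹ * ((w : ℂ) * σ g (g⁻¹ * x)) * σ g⁻¹ x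
            = (w : ℂ) * ((σ g (g⁻¹ * x))⁻¹ * σ g (g⁻¹ * x)) * ((σ g⁻¹ x)⁻¹ * σ g⁻¹ x) from by
          ring]
        rw [inv_mul_cancel₀ hcne, inv_mul_cancel₀ hsne, mul_one, mul_one]
      rw [pairCE_congr ⟨(σ g g⁻¹)⁻¹ * ((w : ℂ) * σ g (g⁻¹ * x)) * σ g⁻¹ x,
        by rw [hval]; exact w.2⟩ w (g⁻¹ * x) hval]
      ring
    rw [swap_helper]
    refine Finset.sum_congr rfl fun g _ => Finset.sum_congr rfl fun j _ => ?_
    rw [hre g j (a g i j)]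
    ring
  -- the composition identity and the conclusion
  have hWVid : (SpecIncl.Wclm (ceEquiv G r d) (fun z => (z : ℂ)) hv).comp
      (SpecIncl.Vclm (ceEquiv G r d) (fun z => (z : ℂ)⁻¹) hu)
      = ContinuousLinearMap.id ℂ (l2 (G × Fin d)) :=
    SpecIncl.Wclm_comp_Vclm (ceEquiv G r d) (fun z => (z : ℂ)) (fun z => (z : ℂ)⁻¹) hu hv huv
  constructor
  · exact spec_subset_of_intertwine A Atil _ _ hVA hWA hWVid
  · rintro lam ⟨f, hf0, hfeq⟩
    refine ⟨SpecIncl.Vclm (ceEquiv G r d) (fun z => (z : ℂ)⁻¹) hu f, ?_, ?_⟩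
    · intro h0
      apply hf0
      apply lp.ext
      funext xq
      have h1 := congrArg (fun q : l2 (CentExt G r × Fin d) =>
        (q : CentExt G r × Fin d → ℂ) ((ceEquiv G r d).symm (⟨1, one_pow r⟩, xq))) h0
      simp only [SpecIncl.Vclm_apply, Equiv.apply_symm_apply] at h1
      rw [lp.coeFn_zero] at h1
      show (f : G × Fin d → ℂ) xq = (0 : l2 (G × Fin d)) xq
      rw [lp.coeFn_zero]
      simpa using h1
    · have h2 : Atil ((SpecIncl.Vclm (ceEquiv G r d) (fun z => (z : ℂ)⁻¹) hu) f)
          = (SpecIncl.Vclm (ceEquiv G r d) (fun z => (z : ℂ)⁻¹) hu) (A f) := by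
        have h3 := congrFun (congrArg DFunLike.coe hVA) f
        simpa using h3
      rw [h2, hfeq, map_smul]
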